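/- Let q be a prime power, g ≥ 1, and let C be a linear code of length n over 𝔽_q. Then, as a polynomial identity in commuting indeterminates x and y, Σ_{h ∈ C^g} x^{n − wt^{(g)}(h)} y^{wt^{(g)}(h)} = Σ_{r=0}^{g} [g]_r · Σ_{D ≤ C, dim D = r} x^{n − ‖D‖} y^{‖D‖}, where [g]_0 = 1 and [g]_r = (q^g − 1)(q^g − q)⋯(q^g − q^{r−1}) for r ≥ 1. Equivalently, the specialization of the complete weight enumerator of genus g at x_𝟘 = x and x_a = y for all a ≠ 𝟘 equals Σ_{r=0}^{g} [g]_r w_C^r(x, y). -/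

import Mathlib

open scoped Classical

open Finset Module Submodule

lemma aux_li_card (F : Type*) [Field F] [Fintype F] (g r : ℕ) :
    Nat.card {s : Fin r → (Fin g → F) // LinearIndependent F s} =
      ∏ i ∈ Finset.range r, (Fintype.card F ^ g - Fintype.card F ^ i) := by
  have hfr : Module.finrank F (Fin g → F) = g := by simp
  rcases le_or_gt r g with hle | hlt
  · rw [card_linearIndependent (K := F) (V := Fin g → F) (by rw [hfr]; exact hle)]
    rw [hfr, ← Fin.prod_univ_eq_prod_range]
  · have h0 : IsEmpty {s : Fin r → (Fin g → F) // LinearIndependent F s} := by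
      constructor
      rintro ⟨s, hs⟩
      have := hs.fintype_card_le_finrank
      simp [hfr] at this
      omega
    rw [Nat.card_of_isEmpty]
    refine (Finset.prod_eq_zero (Finset.mem_range.2 hlt) ?_).symm
    simp

lemma aux_span_iff_li (F : Type*) [Field F] (g r : ℕ) (h : Fin g → (Fin r → F)) :
    Submodule.span F (Set.range h) = ⊤ ↔ LinearIndependent F (fun i j => h j i) := by
  set A : Matrix (Fin r) (Fin g) F := Matrix.of fun i j => h j i with hA
  have h1 : A.rank = Module.finrank F (Submodule.span F (Set.range h)) := by
    rw [Matrix.rank_eq_finrank_span_cols]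
    rfl
  have h2 : A.rank = Module.finrank F (Submodule.span F (Set.range fun i j => h j i)) := by
    rw [Matrix.rank_eq_finrank_span_row]
    rfl
  rw [linearIndependent_iff_card_eq_finrank_span]
  unfold Set.finrank
  rw [← h2, h1, Fintype.card_fin]
  constructor
  · intro ht
    rw [ht, finrank_top]
    simp
  · intro ht
    apply Submodule.eq_top_of_finrank_eq
    simp [← ht]

lemma aux_span_card (F : Type*) [Field F] [Fintype F] (g : ℕ) (V : Type*) [AddCommGroup V]
    [Module F V] [Module.Finite F V] :
    Nat.card {h : Fin g → V // Submodule.span F (Set.range h) = ⊤} =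
      ∏ i ∈ Finset.range (Module.finrank F V), (Fintype.card F ^ g - Fintype.card F ^ i) := by
  set r := Module.finrank F V with hr
  let e : V ≃ₗ[F] (Fin r → F) := (Module.finBasis F V).equivFun
  have key : ∀ h : Fin g → V,
      Submodule.span F (Set.range h) = ⊤ ↔ Submodule.span F (Set.range (⇑e ∘ h)) = ⊤ := by
    intro h
    rw [Set.range_comp, ← LinearEquiv.coe_coe, ← Submodule.map_span]
    constructor
    · rintro ht; rw [ht, Submodule.map_top]; exact LinearEquiv.range e
    · intro ht
      apply Submodule.map_injective_of_injective e.injective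
      rw [ht, Submodule.map_top]; exact (LinearEquiv.range e).symm
  have e1 : {h : Fin g → V // Submodule.span F (Set.range h) = ⊤} ≃
      {h : Fin g → (Fin r → F) // Submodule.span F (Set.range h) = ⊤} :=
    (Equiv.subtypeEquiv (Equiv.piCongrRight fun _ => e.toEquiv) (by
      intro h
      exact key h))
  have e2 : {h : Fin g → (Fin r → F) // Submodule.span F (Set.range h) = ⊤} ≃
      {s : Fin r → (Fin g → F) // LinearIndependent F s} :=
    Equiv.subtypeEquiv ⟨fun h i j => h j i, fun s j i => s i j, fun _ => rfl, fun _ => rfl⟩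
      (fun h => aux_span_iff_li F g r h)
  rw [Nat.card_congr (e1.trans e2), aux_li_card]

lemma aux_fiber_card (F : Type*) [Field F] [Fintype F] {M : Type*} [AddCommGroup M] [Module F M]
    [Module.Finite F M] [Fintype M]
    (g : ℕ) (C D : Submodule F M) (hDC : D ≤ C) :
    Nat.card {h : Fin g → C // Submodule.span F (Set.range fun j => (h j : M)) = D} =
      ∏ i ∈ Finset.range (Module.finrank F D), (Fintype.card F ^ g - Fintype.card F ^ i) := by
  have coe_iff : ∀ h : Fin g → D,
      Submodule.span F (Set.range fun j => ((h j : M))) = D ↔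
        Submodule.span F (Set.range h) = ⊤ := by
    intro h
    have : (Set.range fun j => ((h j : M))) = D.subtype '' Set.range h := by
      rw [← Set.range_comp]; rfl
    rw [this, ← Submodule.map_span]
    constructor
    · intro ht
      apply Submodule.map_injective_of_injective D.injective_subtype
      rw [ht, Submodule.map_subtype_top]
    · intro ht; rw [ht, Submodule.map_subtype_top]
  have e : {h : Fin g → C // Submodule.span F (Set.range fun j => (h j : M)) = D} ≃
      {h : Fin g → D // Submodule.span F (Set.range h) = ⊤} :=
    ⟨fun h => ⟨fun j => ⟨(h.1 j : M), by
        have hm : (h.1 j : M) ∈ Submodule.span F (Set.range fun j => ((h.1 j : M))) :=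
          Submodule.subset_span ⟨j, rfl⟩
        rwa [h.2] at hm⟩,
        (coe_iff _).1 h.2⟩,
     fun h => ⟨fun j => ⟨(h.1 j : M), hDC (h.1 j).2⟩, (coe_iff h.1).2 h.2⟩,
     fun h => rfl, fun h => rfl⟩
  rw [Nat.card_congr e, aux_span_card]

lemma aux_supp (F : Type*) [Field F] {n g : ℕ} (v : Fin g → (Fin n → F)) (i : Fin n) :
    (fun j => v j i) ≠ 0 ↔ ∃ w ∈ Submodule.span F (Set.range v), w i ≠ 0 := by
  rw [Function.ne_iff]
  constructor
  · rintro ⟨j, hj⟩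
    exact ⟨v j, Submodule.subset_span ⟨j, rfl⟩, hj⟩
  · rintro ⟨w, hw, hwi⟩
    by_contra hc
    push_neg at hc
    have hle : Submodule.span F (Set.range v) ≤ LinearMap.ker (LinearMap.proj i) := by
      rw [Submodule.span_le]
      rintro _ ⟨j, rfl⟩
      simpa using hc j
    exact hwi (hle hw)


/-- Over a finite field `F` with `q` elements, for `g ≥ 1` and a linear code
`C ≤ F^n`, with `h ∈ C^g` identified with its columns and `wt^{(g)} h` the number of
nonzero columns, and with `‖D‖` the size of the support of a subcode `D ≤ C`,
`Σ_{h ∈ C^g} x^{n − wt^{(g)} h} y^{wt^{(g)} h}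
   = Σ_{r=0}^{g} [g]_r Σ_{D ≤ C, dim D = r} x^{n − ‖D‖} y^{‖D‖}`,
where `[g]_r = (q^g − 1)(q^g − q)⋯(q^g − q^{r−1})` (and `[g]_0 = 1`); i.e. the genus-`g`
complete weight enumerator specialized at `x_𝟘 = x`, `x_a = y (a ≠ 𝟘)` is
`Σ_r [g]_r w_C^r(x, y)`. -/
theorem stmt_8 (g n : ℕ) (hg : 0 < g) (F : Type*) [Field F] [Fintype F]
    (C : Submodule F (Fin n → F)) :
    ∑ h : Fin g → C, (MvPolynomial.X 0 : MvPolynomial (Fin 2) ℤ) ^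
          (n - (Finset.univ.filter fun i => (fun j => (h j : Fin n → F) i) ≠ 0).card) *
        MvPolynomial.X 1 ^
          (Finset.univ.filter fun i => (fun j => (h j : Fin n → F) i) ≠ 0).card
      = ∑ r ∈ Finset.range (g + 1),
          ((∏ i ∈ Finset.range r,
              ((Fintype.card F) ^ g - (Fintype.card F) ^ i) : ℕ) :
            MvPolynomial (Fin 2) ℤ) *
          ∑ D ∈ Finset.univ.filter fun D : Submodule F (Fin n → F) =>
              D ≤ C ∧ Module.finrank F D = r,
            (MvPolynomial.X 0 : MvPolynomial (Fin 2) ℤ) ^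
                (n - (Finset.univ.filter fun i : Fin n => ∃ w ∈ D, w i ≠ 0).card) *
              MvPolynomial.X 1 ^
                (Finset.univ.filter fun i : Fin n => ∃ w ∈ D, w i ≠ 0).card := by
  set q := Fintype.card F with hq
  set c : ℕ → ℕ := fun r => ∏ i ∈ Finset.range r, (q ^ g - q ^ i) with hc
  set term : Submodule F (Fin n → F) → MvPolynomial (Fin 2) ℤ := fun D =>
    (MvPolynomial.X 0 : MvPolynomial (Fin 2) ℤ) ^
        (n - (Finset.univ.filter fun i : Fin n => ∃ w ∈ D, w i ≠ 0).card) *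
      MvPolynomial.X 1 ^
        (Finset.univ.filter fun i : Fin n => ∃ w ∈ D, w i ≠ 0).card with hterm
  set Φ : (Fin g → C) → Submodule F (Fin n → F) := fun h =>
    Submodule.span F (Set.range fun j => (h j : Fin n → F)) with hΦ
  set S : Finset (Submodule F (Fin n → F)) := Finset.univ.filter (· ≤ C) with hS
  have hczero : ∀ r : ℕ, g < r → c r = 0 := by
    intro r hr
    exact Finset.prod_eq_zero (Finset.mem_range.2 hr) (by simp)
  -- LHS = sum over D in S of c (finrank D) * term D
  have hmaps : ∀ h : Fin g → C, h ∈ Finset.univ → Φ h ∈ S := by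
    intro h _
    rw [hS, Finset.mem_filter]
    refine ⟨Finset.mem_univ _, ?_⟩
    rw [hΦ, Submodule.span_le]
    rintro _ ⟨j, rfl⟩
    exact (h j).2
  have hL : (∑ h : Fin g → C, (MvPolynomial.X 0 : MvPolynomial (Fin 2) ℤ) ^
          (n - (Finset.univ.filter fun i => (fun j => (h j : Fin n → F) i) ≠ 0).card) *
        MvPolynomial.X 1 ^
          (Finset.univ.filter fun i => (fun j => (h j : Fin n → F) i) ≠ 0).card)
      = ∑ D ∈ S, (c (Module.finrank F ↥D) : MvPolynomial (Fin 2) ℤ) * term D := by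
    have h1 : ∀ h : Fin g → C,
        (Finset.univ.filter fun i => (fun j => (h j : Fin n → F) i) ≠ 0) =
          (Finset.univ.filter fun i : Fin n => ∃ w ∈ Φ h, w i ≠ 0) := by
      intro h
      apply Finset.filter_congr
      intro i _
      exact aux_supp F (fun j => (h j : Fin n → F)) i
    calc (∑ h : Fin g → C, (MvPolynomial.X 0 : MvPolynomial (Fin 2) ℤ) ^
          (n - (Finset.univ.filter fun i => (fun j => (h j : Fin n → F) i) ≠ 0).card) *
        MvPolynomial.X 1 ^
          (Finset.univ.filter fun i => (fun j => (h j : Fin n → F) i) ≠ 0).card)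
        = ∑ h : Fin g → C, term (Φ h) := by
          apply Finset.sum_congr rfl
          intro h _
          rw [hterm, h1 h]
      _ = ∑ D ∈ S, ∑ h ∈ Finset.univ.filter (fun h : Fin g → C => Φ h = D), term D :=
          (Finset.sum_fiberwise_of_maps_to' hmaps term).symm
      _ = ∑ D ∈ S, (c (Module.finrank F ↥D) : MvPolynomial (Fin 2) ℤ) * term D := by
          apply Finset.sum_congr rfl
          intro D hD
          rw [hS, Finset.mem_filter] at hD
          have hcard : (Finset.univ.filter (fun h : Fin g → C => Φ h = D)).card =
              c (Module.finrank F ↥D) := by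
            rw [← Fintype.card_subtype, ← Nat.card_eq_fintype_card]
            exact aux_fiber_card F g C D hD.2
          rw [Finset.sum_const, hcard, nsmul_eq_mul]
  rw [hL]
  -- RHS
  have h2 : ∀ r : ℕ, (Finset.univ.filter fun D : Submodule F (Fin n → F) =>
      D ≤ C ∧ Module.finrank F ↥D = r) = S.filter (fun D : Submodule F (Fin n → F) => Module.finrank F ↥D = r) := by
    intro r
    rw [hS, Finset.filter_filter]
  calc ∑ D ∈ S, (c (Module.finrank F ↥D) : MvPolynomial (Fin 2) ℤ) * term D
      = ∑ D ∈ S, if Module.finrank F ↥D ∈ Finset.range (g + 1) then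
          (c (Module.finrank F ↥D) : MvPolynomial (Fin 2) ℤ) * term D else 0 := by
        apply Finset.sum_congr rfl
        intro D _
        by_cases hd : Module.finrank F ↥D ∈ Finset.range (g + 1)
        · rw [if_pos hd]
        · rw [if_neg hd]
          rw [Finset.mem_range] at hd
          rw [hczero _ (by omega)]
          simp
    _ = ∑ D ∈ S, ∑ r ∈ Finset.range (g + 1), if Module.finrank F ↥D = r then
          (c (Module.finrank F ↥D) : MvPolynomial (Fin 2) ℤ) * term D else 0 := by
        apply Finset.sum_congr rfl
        intro D _
        rw [Finset.sum_ite_eq]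
    _ = ∑ r ∈ Finset.range (g + 1), ∑ D ∈ S, if Module.finrank F ↥D = r then
          (c (Module.finrank F ↥D) : MvPolynomial (Fin 2) ℤ) * term D else 0 :=
        Finset.sum_comm
    _ = ∑ r ∈ Finset.range (g + 1),
          (c r : MvPolynomial (Fin 2) ℤ) *
            ∑ D ∈ Finset.univ.filter fun D : Submodule F (Fin n → F) =>
              D ≤ C ∧ Module.finrank F ↥D = r, term D := by
        apply Finset.sum_congr rfl
        intro r _
        rw [h2 r, Finset.mul_sum]
        conv_rhs => rw [Finset.sum_filter]
        apply Finset.sum_congr rfl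
        intro D _
        by_cases hd : Module.finrank F ↥D = r
        · rw [hd, if_pos rfl]
        · rw [if_neg hd, if_neg hd]
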